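/- There exists a constant C > 0 such that for every real number a with 0 < a ≤ 1, the infinite product ∏_{m=0}^{∞} (1 + a·2^m)^{1/2^m} converges and satisfies ∏_{m=0}^{∞} (1 + a·2^m)^{1/2^m} ≤ exp(C·√a). -/

import Mathlib

open Real

private lemma hasProd_rexp {f : ℕ → ℝ} {a : ℝ} (h : HasSum f a) :
    HasProd (fun n => Real.exp (f n)) (Real.exp a) := by
  refine Filter.Tendsto.congr (fun s => ?_) (Real.continuous_exp.continuousAt.tendsto.comp h)
  simp [Function.comp, Real.exp_sum]

private lemma log_le_two_sqrt {x : ℝ} (hx : 0 ≤ x) : Real.log (1 + x) ≤ 2 * Real.sqrt x := by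
  have h1 : (1 : ℝ) + x ≤ Real.exp (2 * Real.sqrt x) := by
    have hs : 0 ≤ Real.sqrt x := Real.sqrt_nonneg x
    have h2 : (1 + Real.sqrt x) ^ 2 ≤ Real.exp (Real.sqrt x) ^ 2 := by
      have := Real.add_one_le_exp (Real.sqrt x)
      nlinarith [Real.exp_pos (Real.sqrt x)]
    calc (1 : ℝ) + x = 1 + Real.sqrt x * Real.sqrt x := by rw [Real.mul_self_sqrt hx]
      _ ≤ (1 + Real.sqrt x) ^ 2 := by nlinarith
      _ ≤ Real.exp (Real.sqrt x) ^ 2 := h2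
      _ = Real.exp (2 * Real.sqrt x) := by
          rw [← Real.exp_nat_mul]; norm_num [mul_comm]
  calc Real.log (1 + x) ≤ Real.log (Real.exp (2 * Real.sqrt x)) :=
        Real.log_le_log (by positivity) h1
    _ = 2 * Real.sqrt x := Real.log_exp _

private lemma sqrt_two_pow (m : ℕ) : Real.sqrt (2 ^ m) = Real.sqrt 2 ^ m := by
  rw [show ((2:ℝ) ^ m) = (Real.sqrt 2 ^ m) ^ 2 by
      rw [← pow_mul, mul_comm, pow_mul, Real.sq_sqrt (by norm_num : (0:ℝ) ≤ 2)],
    Real.sqrt_sq (by positivity)]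

theorem stmt_15 :
    ∃ C > (0 : ℝ), ∀ a : ℝ, 0 < a → a ≤ 1 →
      Multipliable (fun m : ℕ => ((1 + a * 2 ^ m) : ℝ) ^ ((1 : ℝ) / 2 ^ m)) ∧
      ∏' m : ℕ, ((1 + a * 2 ^ m) : ℝ) ^ ((1 : ℝ) / 2 ^ m) ≤ Real.exp (C * Real.sqrt a) := by
  set r : ℝ := (Real.sqrt 2)⁻¹ with hr
  have h2 : (0:ℝ) < Real.sqrt 2 := Real.sqrt_pos.2 (by norm_num)
  have hr0 : 0 < r := by positivity
  have hr1 : r < 1 := by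
    rw [hr, inv_lt_one_iff₀]
    right
    have : (1:ℝ) < Real.sqrt 2 := by
      have := Real.sqrt_lt_sqrt (by norm_num : (0:ℝ) ≤ 1) (by norm_num : (1:ℝ) < 2)
      simpa using this
    linarith
  have hC : (0:ℝ) < 2 * (1 - r)⁻¹ := by
    have : (0:ℝ) < 1 - r := by linarith
    positivity
  refine ⟨2 * (1 - r)⁻¹, hC, fun a ha ha1 => ?_⟩
  have hpos : ∀ m : ℕ, (0:ℝ) < 1 + a * 2 ^ m := fun m => by positivity
  set g : ℕ → ℝ := fun m => (1 / 2 ^ m) * Real.log (1 + a * 2 ^ m) with hg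
  have hfg : (fun m : ℕ => ((1 + a * 2 ^ m) : ℝ) ^ ((1 : ℝ) / 2 ^ m))
      = fun m => Real.exp (g m) := by
    funext m
    rw [hg, ← Real.exp_log (x := ((1 + a * 2 ^ m) : ℝ) ^ ((1 : ℝ) / 2 ^ m)) (by positivity),
      Real.log_rpow (hpos m)]
  have hsa : 0 ≤ Real.sqrt a := Real.sqrt_nonneg a
  have hgle : ∀ m : ℕ, g m ≤ 2 * Real.sqrt a * r ^ m := by
    intro m
    have h1 : Real.log (1 + a * 2 ^ m) ≤ 2 * Real.sqrt (a * 2 ^ m) :=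
      log_le_two_sqrt (by positivity)
    have h2' : Real.sqrt (a * 2 ^ m) = Real.sqrt a * Real.sqrt 2 ^ m := by
      rw [Real.sqrt_mul ha.le, sqrt_two_pow]
    have hkey : (1 / 2 ^ m : ℝ) * (2 * Real.sqrt (a * 2 ^ m)) = 2 * Real.sqrt a * r ^ m := by
      rw [h2', hr, inv_pow]
      have h2m : ((2:ℝ) ^ m) = (Real.sqrt 2 ^ m) ^ 2 := by
        rw [← pow_mul, mul_comm, pow_mul, Real.sq_sqrt (by norm_num : (0:ℝ) ≤ 2)]
      have hne : (Real.sqrt 2 ^ m) ≠ 0 := by positivity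
      field_simp [h2m]
      ring_nf
      rw [pow_mul', Real.sq_sqrt (by norm_num : (0:ℝ) ≤ 2)]
    calc g m ≤ (1 / 2 ^ m : ℝ) * (2 * Real.sqrt (a * 2 ^ m)) := by
          have : (0:ℝ) ≤ 1 / 2 ^ m := by positivity
          exact mul_le_mul_of_nonneg_left h1 this
      _ = 2 * Real.sqrt a * r ^ m := hkey
  have hgnn : ∀ m : ℕ, 0 ≤ g m := by
    intro m
    have : (0:ℝ) ≤ Real.log (1 + a * 2 ^ m) :=
      Real.log_nonneg (by nlinarith [pow_pos (show (0:ℝ) < 2 by norm_num) m])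
    positivity
  have hgeo : Summable (fun m : ℕ => 2 * Real.sqrt a * r ^ m) :=
    (summable_geometric_of_lt_one hr0.le hr1).mul_left _
  have hsum : Summable g := Summable.of_nonneg_of_le hgnn hgle hgeo
  have htsum : ∑' m, g m ≤ 2 * (1 - r)⁻¹ * Real.sqrt a := by
    calc ∑' m, g m ≤ ∑' m, 2 * Real.sqrt a * r ^ m := Summable.tsum_le_tsum hgle hsum hgeo
      _ = 2 * Real.sqrt a * (1 - r)⁻¹ := by
          rw [tsum_mul_left, tsum_geometric_of_lt_one hr0.le hr1]
      _ = 2 * (1 - r)⁻¹ * Real.sqrt a := by ring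
  have hprod : HasProd (fun m => Real.exp (g m)) (Real.exp (∑' m, g m)) :=
    hasProd_rexp hsum.hasSum
  rw [hfg]
  refine ⟨hprod.multipliable, ?_⟩
  rw [hprod.tprod_eq]
  exact Real.exp_le_exp.2 htsum
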